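/- (Mean of the deformed $q$-binomial variable) Let $0<q<1$, $\theta>0$, $n\in\mathbb{N}$, and let $X$ follow the $q$-binomial distribution of the first kind with probability function $f_X^B(x)=\binom{n}{x}_q q^{\binom{x}{2}}\theta^x \prod_{j=1}^{n}(1+\theta q^{j-1})^{-1}$, $x=0,1,\ldots,n$. Then the mean of the deformed random variable $[X]_{1/q}$ is $E\big([X]_{1/q}\big)=\sum_{x=0}^{n}[x]_{1/q}\,f_X^B(x) = [n]_q\,\frac{\theta}{1+\theta q^{n-1}}$. -/

import Mathlib

open scoped BigOperators

/-- The `q`-factorial `[n]_q! = ∏_{k=1}^n (1-q^k)/(1-q)`. -/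
noncomputable def qFact (q : ℝ) (n : ℕ) : ℝ :=
  ∏ k ∈ Finset.range n, (1 - q ^ (k + 1)) / (1 - q)

/-- The `q`-binomial coefficient. -/
noncomputable def qBinom (q : ℝ) (n x : ℕ) : ℝ :=
  qFact q n / (qFact q x * qFact q (n - x))

/-- The `q`-number `[n]_q = (1-q^n)/(1-q)`. -/
noncomputable def qNat (q : ℝ) (n : ℕ) : ℝ := (1 - q ^ n) / (1 - q)

/-- The deformed value `[x]_{1/q} = (q^{-x}-1)/(q^{-1}-1)`. -/
noncomputable def qDef (q : ℝ) (x : ℕ) : ℝ := (q⁻¹ ^ x - 1) / (q⁻¹ - 1)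

lemma qFact_pos {q : ℝ} (hq0 : 0 < q) (hq1 : q < 1) (n : ℕ) : 0 < qFact q n := by
  unfold qFact
  apply Finset.prod_pos
  intro k _
  have h1 : q ^ (k + 1) < 1 := pow_lt_one₀ hq0.le hq1 (Nat.succ_ne_zero k)
  have h2 : (0:ℝ) < 1 - q := by linarith
  have h3 : (0:ℝ) < 1 - q ^ (k+1) := by linarith
  positivity

lemma qFact_succ (q : ℝ) (n : ℕ) :
    qFact q (n + 1) = qFact q n * ((1 - q ^ (n + 1)) / (1 - q)) := by
  unfold qFact
  exact Finset.prod_range_succ _ n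

lemma qFact_zero (q : ℝ) : qFact q 0 = 1 := by simp [qFact]

lemma qBinom_zero {q : ℝ} (hq0 : 0 < q) (hq1 : q < 1) (n : ℕ) : qBinom q n 0 = 1 := by
  unfold qBinom
  rw [qFact_zero]
  field_simp [(qFact_pos hq0 hq1 n).ne']
  simp

lemma qBinom_self {q : ℝ} (hq0 : 0 < q) (hq1 : q < 1) (n : ℕ) : qBinom q n n = 1 := by
  unfold qBinom
  simp [qFact_zero]
  simp [(qFact_pos hq0 hq1 n).ne']

lemma tri (y : ℕ) : (y + 1) * y / 2 = y * (y - 1) / 2 + y := by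
  cases y with
  | zero => rfl
  | succ k =>
    have h : (k + 1 + 1) * (k + 1) = (k + 1) * (k + 1 - 1) + (k + 1) * 2 := by
      simp only [Nat.succ_sub_one]
      ring
    rw [h, Nat.add_mul_div_right _ _ (by norm_num : 0 < 2)]

lemma key_alg (F a b t A B C : ℝ) (ha : a ≠ 0) (hb : b ≠ 0) (hB : B ≠ 0) (hC : C ≠ 0)
    (hA : A = C + t * B) :
    F * A / ((a * B) * (b * C)) = F / ((a * B) * b) + t * (F / (a * (b * C))) := by
  subst hA
  field_simp

lemma qPascal {q : ℝ} (hq0 : 0 < q) (hq1 : q < 1) {m x : ℕ} (hx : x < m) :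
    qBinom q (m + 1) (x + 1) = qBinom q m (x + 1) + q ^ (m - x) * qBinom q m x := by
  have h1q : (1 : ℝ) - q ≠ 0 := by linarith
  have hBx : q ^ (x + 1) < 1 := pow_lt_one₀ hq0.le hq1 (Nat.succ_ne_zero x)
  have hCmx : q ^ (m - x) < 1 := pow_lt_one₀ hq0.le hq1 (by omega)
  have hB : ((1 : ℝ) - q ^ (x + 1)) / (1 - q) ≠ 0 := by
    apply div_ne_zero (by linarith) h1q
  have hC : ((1 : ℝ) - q ^ (m - x)) / (1 - q) ≠ 0 := by
    apply div_ne_zero (by linarith) h1q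
  have e1 : m + 1 - (x + 1) = m - x := by omega
  have e2 : m - (x + 1) = m - x - 1 := by omega
  have e3 : qFact q (m - x) = qFact q (m - x - 1) * ((1 - q ^ (m - x)) / (1 - q)) := by
    have h : m - x = (m - x - 1) + 1 := by omega
    rw [h, qFact_succ]
    norm_num
  unfold qBinom
  rw [e1, e2, qFact_succ q m, qFact_succ q x, e3]
  apply key_alg _ _ _ _ _ _ _ (qFact_pos hq0 hq1 x).ne' (qFact_pos hq0 hq1 (m - x - 1)).ne' hB hC
  have hpow : q ^ (m - x) * q ^ (x + 1) = q ^ (m + 1) := by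
    rw [← pow_add]
    congr 1
    omega
  have key : (1 - q ^ (m + 1) : ℝ) = (1 - q ^ (m - x)) + q ^ (m - x) * (1 - q ^ (x + 1)) := by
    rw [mul_sub, mul_one, hpow]; ring
  rw [key]; ring

lemma rothe {q : ℝ} (hq0 : 0 < q) (hq1 : q < 1) (θ : ℝ) (m : ℕ) :
    ∑ x ∈ Finset.range (m + 1), qBinom q m x * q ^ (x * (x - 1) / 2) * θ ^ x
      = ∏ j ∈ Finset.range m, (1 + θ * q ^ j) := by
  induction m with
  | zero => simp [qBinom_self hq0 hq1]
  | succ m ih =>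
    rw [Finset.sum_range_succ, Finset.sum_range_succ']
    have hterm : ∀ y ∈ Finset.range m,
        qBinom q (m + 1) (y + 1) * q ^ ((y + 1) * (y + 1 - 1) / 2) * θ ^ (y + 1)
        = qBinom q m (y + 1) * q ^ ((y + 1) * (y + 1 - 1) / 2) * θ ^ (y + 1)
          + (θ * q ^ m) * (qBinom q m y * q ^ (y * (y - 1) / 2) * θ ^ y) := by
      intro y hy
      have hy' : y < m := Finset.mem_range.mp hy
      rw [qPascal hq0 hq1 hy']
      have he : (y + 1) * (y + 1 - 1) / 2 = y * (y - 1) / 2 + y := by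
        simpa using tri y
      rw [he, pow_add, pow_succ]
      have hq2 : q ^ (m - y) * q ^ y = q ^ m := by
        rw [← pow_add]; congr 1; omega
      linear_combination qBinom q m y * q ^ (y * (y - 1) / 2) * θ ^ y * θ * hq2
    rw [Finset.sum_congr rfl hterm, Finset.sum_add_distrib, ← Finset.mul_sum]
    rw [qBinom_zero hq0 hq1, qBinom_self hq0 hq1]
    have hCm : q ^ ((m + 1) * (m + 1 - 1) / 2) = q ^ (m * (m - 1) / 2) * q ^ m := by
      rw [← pow_add]
      congr 1
      simpa using tri m
    rw [hCm]
    have hS' : ∑ x ∈ Finset.range (m + 1), qBinom q m x * q ^ (x * (x - 1) / 2) * θ ^ x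
        = (∑ y ∈ Finset.range m,
            qBinom q m (y + 1) * q ^ ((y + 1) * (y + 1 - 1) / 2) * θ ^ (y + 1)) + 1 := by
      rw [Finset.sum_range_succ']
      simp [qBinom_zero hq0 hq1]
    have hS2 : ∑ x ∈ Finset.range (m + 1), qBinom q m x * q ^ (x * (x - 1) / 2) * θ ^ x
        = (∑ y ∈ Finset.range m, qBinom q m y * q ^ (y * (y - 1) / 2) * θ ^ y)
          + 1 * q ^ (m * (m - 1) / 2) * θ ^ m := by
      rw [Finset.sum_range_succ, qBinom_self hq0 hq1]
    rw [Finset.prod_range_succ, ← ih]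
    linear_combination -hS' - θ * q ^ m * hS2

/-- **Mean of the deformed q-binomial variable**:
`E([X]_{1/q}) = [n]_q θ / (1 + θ q^{n-1})`. -/
theorem qBinomial_deformed_mean (q θ : ℝ) (hq0 : 0 < q) (hq1 : q < 1) (hθ : 0 < θ)
    (n : ℕ) :
    ∑ x ∈ Finset.range (n + 1),
      qDef q x * (qBinom q n x * q ^ (x * (x - 1) / 2) * θ ^ x /
        ∏ j ∈ Finset.range n, (1 + θ * q ^ j)) =
      qNat q n * (θ / (1 + θ * q ^ ((n : ℤ) - 1))) := by
  have h1q : (1 : ℝ) - q ≠ 0 := by linarith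
  have hqne : q ≠ 0 := hq0.ne'
  obtain _ | m := n
  · simp [qDef, qNat]
  · set P1 : ℝ := ∏ j ∈ Finset.range m, (1 + θ * q ^ j) with hP1
    have hfac : ∀ j : ℕ, (0:ℝ) < 1 + θ * q ^ j := by
      intro j
      positivity
    have hP1pos : 0 < P1 := Finset.prod_pos fun j _ => hfac j
    have hpm : (0:ℝ) < 1 + θ * q ^ m := hfac m
    have hdef : ∀ y : ℕ, qDef q (y + 1) = (1 - q ^ (y + 1)) / (q ^ y * (1 - q)) := by
      intro y
      unfold qDef
      rw [inv_pow]
      have hpy : (q:ℝ) ^ y ≠ 0 := pow_ne_zero _ hqne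
      have hpy1 : (q:ℝ) ^ (y+1) ≠ 0 := pow_ne_zero _ hqne
      field_simp
      ring
    have hterm : ∀ y ∈ Finset.range (m + 1),
        qDef q (y + 1) * (qBinom q (m + 1) (y + 1) * q ^ ((y + 1) * (y + 1 - 1) / 2)
          * θ ^ (y + 1))
        = (qNat q (m + 1) * θ) * (qBinom q m y * q ^ (y * (y - 1) / 2) * θ ^ y) := by
      intro y hy
      have hy' : y < m + 1 := Finset.mem_range.mp hy
      have he : q ^ ((y + 1) * (y + 1 - 1) / 2) = q ^ (y * (y - 1) / 2) * q ^ y := by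
        rw [← pow_add]
        congr 1
        simpa using tri y
      have e1 : m + 1 - (y + 1) = m - y := by omega
      rw [hdef y, he]
      unfold qBinom qNat
      rw [e1, qFact_succ q m, qFact_succ q y]
      have hBy : q ^ (y + 1) < 1 := pow_lt_one₀ hq0.le hq1 (Nat.succ_ne_zero y)
      have hBy' : ((1:ℝ) - q ^ (y + 1)) ≠ 0 := by linarith
      have hfy := (qFact_pos hq0 hq1 y).ne'
      have hfmy := (qFact_pos hq0 hq1 (m - y)).ne'
      have hpy : (q:ℝ) ^ y ≠ 0 := pow_ne_zero _ hqne
      field_simp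
      ring
    have hrw : ∀ x ∈ Finset.range (m + 1 + 1),
        qDef q x * (qBinom q (m + 1) x * q ^ (x * (x - 1) / 2) * θ ^ x /
          ∏ j ∈ Finset.range (m + 1), (1 + θ * q ^ j))
        = qDef q x * (qBinom q (m + 1) x * q ^ (x * (x - 1) / 2) * θ ^ x) /
          ∏ j ∈ Finset.range (m + 1), (1 + θ * q ^ j) := by
      intro x _
      ring
    rw [Finset.sum_congr rfl hrw, ← Finset.sum_div, Finset.sum_range_succ']
    have h0 : qDef q 0 = 0 := by simp [qDef]
    rw [h0, zero_mul, add_zero, Finset.sum_congr rfl hterm, ← Finset.mul_sum,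
      rothe hq0 hq1 θ m, ← hP1, Finset.prod_range_succ, ← hP1]
    have hz : q ^ (((m + 1 : ℕ) : ℤ) - 1) = q ^ m := by
      have h : ((m + 1 : ℕ) : ℤ) - 1 = (m : ℤ) := by push_cast; ring
      rw [h, zpow_natCast]
    rw [hz]
    rw [mul_assoc, mul_div_assoc]
    congr 1
    rw [mul_comm P1 (1 + θ * q ^ m)]
    field_simp
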